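/- Consider the equilibrium flow ẋ = −S ∇Ψ*_x(Sᵀ(∇Φ(x) − ∇Φ(x̃))) on ℝ_{>0}^V. Then: (i) a point x ∈ ℝ_{>0}^V is a steady state (the right-hand side vanishes at x) if and only if Sᵀ(∇Φ(x) − ∇Φ(x̃)) = 0, i.e., the steady-state set equals the equilibrium manifold M^eq(x̃); (ii) for any initial state x₀ ∈ ℝ_{>0}^V there is exactly one steady state x_eq in the stoichiometric class P^sc(x₀) := {x ∈ ℝ_{>0}^V : x − x₀ ∈ Im S}, namely the unique point x† of P^sc(x₀) ∩ M^eq(x̃), and it satisfies the variational characterizations x_eq = argmin_{x ∈ P^sc(x₀)} D[x‖x̃] and x_eq = argmin_{x_q ∈ M^eq(x̃)} D[x₀‖x_q]. -/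

import Mathlib

open Matrix Filter Set
open Topology

noncomputable def grad {n : ℕ} (F : (Fin n → ℝ) → ℝ) (x : Fin n → ℝ) : Fin n → ℝ :=
  fun i => fderiv ℝ F x (Pi.single i 1)

def IsDissipation {n : ℕ} (Ψ : (Fin n → ℝ) → ℝ) : Prop :=
  StrictConvexOn ℝ Set.univ Ψ ∧ ContDiff ℝ 1 Ψ ∧
  Tendsto (fun f => Ψ f / ‖f‖) (Bornology.cobounded (Fin n → ℝ)) atTop ∧
  (∀ f, Ψ (-f) = Ψ f) ∧ Ψ 0 = 0

noncomputable def legendre {n : ℕ} (Ψ : (Fin n → ℝ) → ℝ) (j : Fin n → ℝ) : ℝ :=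
  ⨆ f : Fin n → ℝ, (j ⬝ᵥ f - Ψ f)

noncomputable def breg {n : ℕ} (F : (Fin n → ℝ) → ℝ) (x x' : Fin n → ℝ) : ℝ :=
  F x - F x' - (x - x') ⬝ᵥ grad F x'

def posOrth (n : ℕ) : Set (Fin n → ℝ) := {x | ∀ i, 0 < x i}

def IsThermo {n : ℕ} (Φ : (Fin n → ℝ) → ℝ) : Prop :=
  StrictConvexOn ℝ (posOrth n) Φ ∧
  (∀ x ∈ posOrth n, DifferentiableAt ℝ Φ x) ∧
  Set.BijOn (grad Φ) (posOrth n) Set.univ ∧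
  (∀ xin ∈ posOrth n, ∀ xbd ∈ frontier {x : Fin n → ℝ | ∀ i, 0 ≤ x i},
    Tendsto (fun lam : ℝ => deriv (fun l : ℝ => Φ (l • xin + (1 - l) • xbd)) lam)
      (nhdsWithin 0 (Set.Ioi 0)) atBot)

section helperlemmas
variable {n : ℕ}

lemma dot_grad (F : (Fin n → ℝ) → ℝ) (x v : Fin n → ℝ) :
    v ⬝ᵥ grad F x = fderiv ℝ F x v := by
  have hv : v = ∑ i, v i • (Pi.single i 1 : Fin n → ℝ) := by
    funext j
    simp [Finset.sum_apply, Pi.single_apply]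
  conv_rhs => rw [hv]
  rw [map_sum]
  simp [grad, dotProduct]

lemma hasDerivAt_comp_line {F : (Fin n → ℝ) → ℝ} {p d : Fin n → ℝ} {l : ℝ}
    (hF : DifferentiableAt ℝ F (p + l • d)) :
    HasDerivAt (fun t : ℝ => F (p + t • d)) (fderiv ℝ F (p + l • d) d) l := by
  have h1 : HasDerivAt (fun t : ℝ => p + t • d) d l := by
    simpa using ((hasDerivAt_id l).smul_const d).const_add p
  exact hF.hasFDerivAt.comp_hasDerivAt l h1

lemma convexOn_comp_line {s : Set (Fin n → ℝ)} {F : (Fin n → ℝ) → ℝ}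
    (hF : ConvexOn ℝ s F) {x y : Fin n → ℝ} (hx : x ∈ s) (hy : y ∈ s) :
    ConvexOn ℝ (Icc (0:ℝ) 1) (fun t : ℝ => F (x + t • (y - x))) := by
  refine ⟨convex_Icc 0 1, fun t1 ht1 t2 ht2 a b ha hb hab => ?_⟩
  have e1 : x + (a * t1 + b * t2) • (y - x)
      = a • (x + t1 • (y - x)) + b • (x + t2 • (y - x)) := by
    have hb' : b = 1 - a := by linarith
    subst hb'
    module
  have := hF.2 (hF.1.add_smul_sub_mem hx hy ht1) (hF.1.add_smul_sub_mem hx hy ht2) ha hb hab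
  simpa [smul_eq_mul, e1] using this

lemma grad_ineq {s : Set (Fin n → ℝ)} {F : (Fin n → ℝ) → ℝ}
    (hF : ConvexOn ℝ s F) (hd : ∀ z ∈ s, DifferentiableAt ℝ F z)
    {x y : Fin n → ℝ} (hx : x ∈ s) (hy : y ∈ s) :
    F x + fderiv ℝ F x (y - x) ≤ F y := by
  have hψ : ConvexOn ℝ (Icc (0:ℝ) 1) (fun t : ℝ => F (x + t • (y - x))) :=
    convexOn_comp_line hF hx hy
  have h0 : HasDerivAt (fun t : ℝ => F (x + t • (y - x))) (fderiv ℝ F x (y - x)) 0 := by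
    have := hasDerivAt_comp_line (F := F) (p := x) (d := y - x) (l := 0)
      (by simpa using hd x hx)
    simpa using this
  have := hψ.le_slope_of_hasDerivAt (left_mem_Icc.2 zero_le_one) (right_mem_Icc.2 zero_le_one)
    zero_lt_one h0
  rw [slope_def_field] at this
  simp only [sub_zero, div_one, one_smul, zero_smul, add_zero] at this
  have e2 : x + (y - x) = y := by abel
  rw [e2] at this
  linarith

lemma grad_ineq_strict {s : Set (Fin n → ℝ)} {F : (Fin n → ℝ) → ℝ}
    (hF : StrictConvexOn ℝ s F) (hd : ∀ z ∈ s, DifferentiableAt ℝ F z)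
    {x y : Fin n → ℝ} (hx : x ∈ s) (hy : y ∈ s) (hne : y ≠ x) :
    F x + fderiv ℝ F x (y - x) < F y := by
  have hψ : StrictConvexOn ℝ (Icc (0:ℝ) 1) (fun t : ℝ => F (x + t • (y - x))) := by
    refine ⟨convex_Icc 0 1, fun t1 ht1 t2 ht2 hne' a b ha hb hab => ?_⟩
    have e1 : x + (a * t1 + b * t2) • (y - x)
        = a • (x + t1 • (y - x)) + b • (x + t2 • (y - x)) := by
      have hb' : b = 1 - a := by linarith
      subst hb'
      module
    have hptne : x + t1 • (y - x) ≠ x + t2 • (y - x) := by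
      intro h
      apply hne'
      have : (t1 - t2) • (y - x) = 0 := by
        have := sub_eq_zero.2 h
        rw [show x + t1 • (y - x) - (x + t2 • (y - x)) = (t1 - t2) • (y - x) by
          rw [sub_smul]; abel] at this
        exact this
      rcases smul_eq_zero.1 this with h' | h'
      · linarith [sub_eq_zero.1 h']
      · exact absurd (sub_eq_zero.1 h') hne
    have := hF.2 (hF.1.add_smul_sub_mem hx hy ht1) (hF.1.add_smul_sub_mem hx hy ht2)
      hptne ha hb hab
    simpa [smul_eq_mul, e1] using this
  have h0 : HasDerivAt (fun t : ℝ => F (x + t • (y - x))) (fderiv ℝ F x (y - x)) 0 := by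
    have := hasDerivAt_comp_line (F := F) (p := x) (d := y - x) (l := 0)
      (by simpa using hd x hx)
    simpa using this
  have := hψ.lt_slope_of_hasDerivAt (left_mem_Icc.2 zero_le_one) (right_mem_Icc.2 zero_le_one)
    zero_lt_one h0
  rw [slope_def_field] at this
  simp only [sub_zero, div_one, one_smul, zero_smul, add_zero] at this
  have e2 : x + (y - x) = y := by abel
  rw [e2] at this
  linarith


lemma posOrth_eq_pi (n : ℕ) : posOrth n = Set.pi Set.univ (fun _ : Fin n => Ioi (0:ℝ)) := by
  ext x; simp [posOrth, Set.mem_pi]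

lemma convex_posOrth (n : ℕ) : Convex ℝ (posOrth n) := by
  rw [posOrth_eq_pi]; exact convex_pi fun i _ => convex_Ioi 0

lemma isOpen_posOrth (n : ℕ) : IsOpen (posOrth n) := by
  rw [posOrth_eq_pi]; exact isOpen_set_pi finite_univ fun i _ => isOpen_Ioi

lemma interior_nonnegOrth (n : ℕ) :
    interior {x : Fin n → ℝ | ∀ i, 0 ≤ x i} = posOrth n := by
  have h : {x : Fin n → ℝ | ∀ i, 0 ≤ x i} = Set.pi Set.univ (fun _ : Fin n => Ici (0:ℝ)) := by
    ext x; simp [Set.mem_pi, Pi.le_def]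
  rw [h, interior_pi_set finite_univ, posOrth_eq_pi]
  simp [interior_Ici]

lemma isClosed_nonnegOrth (n : ℕ) : IsClosed {x : Fin n → ℝ | ∀ i, 0 ≤ x i} := by
  have h : {x : Fin n → ℝ | ∀ i, 0 ≤ x i} = Set.pi Set.univ (fun _ : Fin n => Ici (0:ℝ)) := by
    ext x; simp [Set.mem_pi, Pi.le_def]
  rw [h]; exact isClosed_set_pi fun i _ => isClosed_Ici

lemma mem_frontier_nonnegOrth {x : Fin n → ℝ} (h1 : ∀ i, 0 ≤ x i) (h2 : x ∉ posOrth n) :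
    x ∈ frontier {x : Fin n → ℝ | ∀ i, 0 ≤ x i} := by
  rw [(isClosed_nonnegOrth n).frontier_eq, interior_nonnegOrth]
  exact ⟨h1, h2⟩

lemma continuous_dot (b : Fin n → ℝ) : Continuous fun x : Fin n → ℝ => x ⬝ᵥ b := by
  show Continuous fun x : Fin n → ℝ => ∑ i, x i * b i
  exact continuous_finset_sum _ fun i _ => (continuous_apply i).mul continuous_const

lemma dot_cross {V E : ℕ} {S : Matrix (Fin V) (Fin E) ℝ} {μ d : Fin V → ℝ}
    (hμ : Sᵀ *ᵥ μ = 0) (hd : ∃ w, d = S *ᵥ w) : d ⬝ᵥ μ = 0 := by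
  obtain ⟨w, rfl⟩ := hd
  rw [dotProduct_comm, dotProduct_mulVec, ← mulVec_transpose, hμ, zero_dotProduct]

lemma transpose_mulVec_apply {V E : ℕ} (S : Matrix (Fin V) (Fin E) ℝ) (μ : Fin V → ℝ)
    (e : Fin E) : (Sᵀ *ᵥ μ) e = (S *ᵥ Pi.single e 1) ⬝ᵥ μ := by
  simp only [Matrix.mulVec, dotProduct, transpose_apply, Pi.single_apply,
    mul_ite, mul_one, mul_zero, Finset.sum_ite_eq', Finset.mem_univ, if_true]

end helperlemmas

section diss
variable {m : ℕ} {Ψ : (Fin m → ℝ) → ℝ}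

lemma diss_fderiv_zero (h : IsDissipation Ψ) : fderiv ℝ Ψ 0 = 0 := by
  obtain ⟨hconv, hC1, -, hsym, -⟩ := h
  have hd : Differentiable ℝ Ψ := hC1.differentiable one_ne_zero
  set L := fderiv ℝ Ψ 0 with hL
  have hneg : HasFDerivAt (Ψ ∘ (fun f : Fin m → ℝ => -f))
      (L.comp (-(ContinuousLinearMap.id ℝ (Fin m → ℝ)))) 0 := by
    have hinner : HasFDerivAt (fun f : Fin m → ℝ => -f)
        (-(ContinuousLinearMap.id ℝ (Fin m → ℝ))) 0 := by
      simpa using (-(ContinuousLinearMap.id ℝ (Fin m → ℝ))).hasFDerivAt (x := 0)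
    exact HasFDerivAt.comp 0 (by simpa using (hd 0).hasFDerivAt) hinner
  have heq : (Ψ ∘ (fun f : Fin m → ℝ => -f)) = Ψ := by
    funext f; exact hsym f
  rw [heq] at hneg
  have huniq : L.comp (-(ContinuousLinearMap.id ℝ (Fin m → ℝ))) = L :=
    hneg.unique (hd 0).hasFDerivAt
  ext v
  have := congrArg (fun (T : (Fin m → ℝ) →L[ℝ] ℝ) => T v) huniq
  simp only [ContinuousLinearMap.comp_apply, ContinuousLinearMap.neg_apply,
    ContinuousLinearMap.id_apply, map_neg] at this
  simp only [ContinuousLinearMap.zero_apply]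
  linarith

lemma diss_dot_pos (h : IsDissipation Ψ) {f : Fin m → ℝ} (hf : f ≠ 0) :
    0 < f ⬝ᵥ grad Ψ f := by
  have hd : Differentiable ℝ Ψ := h.2.1.differentiable one_ne_zero
  have h0 : fderiv ℝ Ψ 0 = 0 := diss_fderiv_zero h
  have hΨ0 : Ψ 0 = 0 := h.2.2.2.2
  have h1 : Ψ 0 + fderiv ℝ Ψ 0 (f - 0) < Ψ f :=
    grad_ineq_strict h.1 (fun z _ => hd z) (mem_univ 0) (mem_univ f) hf
  have h2 : Ψ f + fderiv ℝ Ψ f (0 - f) < Ψ 0 :=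
    grad_ineq_strict h.1 (fun z _ => hd z) (mem_univ f) (mem_univ 0) (Ne.symm hf)
  rw [dot_grad]
  have e1 : fderiv ℝ Ψ f (0 - f) = -(fderiv ℝ Ψ f f) := by
    rw [zero_sub, map_neg]
  rw [h0] at h1
  simp only [ContinuousLinearMap.zero_apply] at h1
  rw [e1] at h2
  linarith
end diss

section breglems
variable {n : ℕ} {Φ : (Fin n → ℝ) → ℝ}

lemma breg_pos (hΦ : IsThermo Φ) {p q : Fin n → ℝ} (hp : p ∈ posOrth n)
    (hq : q ∈ posOrth n) (hne : p ≠ q) : 0 < breg Φ p q := by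
  have := grad_ineq_strict hΦ.1 hΦ.2.1 hq hp hne
  rw [breg, dot_grad]
  linarith

lemma breg_lt_left {V E : ℕ} (S : Matrix (Fin V) (Fin E) ℝ) {Φ : (Fin V → ℝ) → ℝ}
    (hΦ : IsThermo Φ) (xtil : Fin V → ℝ) {p q : Fin V → ℝ}
    (hp : p ∈ posOrth V) (hq : q ∈ posOrth V)
    (hpq : ∃ w, p - q = S *ᵥ w) (hqeq : Sᵀ *ᵥ (grad Φ q - grad Φ xtil) = 0) (hne : p ≠ q) :
    breg Φ q xtil < breg Φ p xtil := by
  have h1 : 0 < breg Φ p q := breg_pos hΦ hp hq hne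
  have h2 : (p - q) ⬝ᵥ (grad Φ q - grad Φ xtil) = 0 := dot_cross hqeq hpq
  have expand : breg Φ p xtil - breg Φ q xtil
      = breg Φ p q + (p - q) ⬝ᵥ (grad Φ q - grad Φ xtil) := by
    simp only [breg, dotProduct_sub, sub_dotProduct]
    ring
  linarith

lemma breg_lt_right {V E : ℕ} (S : Matrix (Fin V) (Fin E) ℝ) {Φ : (Fin V → ℝ) → ℝ}
    (hΦ : IsThermo Φ) (xtil : Fin V → ℝ) {x₀ xeq xq : Fin V → ℝ}
    (hxeq : xeq ∈ posOrth V) (hxq : xq ∈ posOrth V)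
    (hrange : ∃ w, xeq - x₀ = S *ᵥ w)
    (heq1 : Sᵀ *ᵥ (grad Φ xeq - grad Φ xtil) = 0)
    (heq2 : Sᵀ *ᵥ (grad Φ xq - grad Φ xtil) = 0) (hne : xq ≠ xeq) :
    breg Φ x₀ xeq < breg Φ x₀ xq := by
  have h1 : 0 < breg Φ xeq xq := breg_pos hΦ hxeq hxq (Ne.symm hne)
  have hker : Sᵀ *ᵥ (grad Φ xq - grad Φ xeq) = 0 := by
    have : grad Φ xq - grad Φ xeq
        = (grad Φ xq - grad Φ xtil) - (grad Φ xeq - grad Φ xtil) := by abel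
    rw [this, mulVec_sub, heq1, heq2, sub_zero]
  have h2 : (xeq - x₀) ⬝ᵥ (grad Φ xq - grad Φ xeq) = 0 := dot_cross hker hrange
  have expand : breg Φ x₀ xq - breg Φ x₀ xeq
      = breg Φ xeq xq + (xeq - x₀) ⬝ᵥ (grad Φ xq - grad Φ xeq) := by
    simp only [breg, dotProduct_sub, sub_dotProduct]
    ring
  linarith
end breglems

lemma exists_eq_point {V E : ℕ} (S : Matrix (Fin V) (Fin E) ℝ) {Φ : (Fin V → ℝ) → ℝ}
    (hΦ : IsThermo Φ) {xtil : Fin V → ℝ} (hxtil : xtil ∈ posOrth V)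
    {x₀ : Fin V → ℝ} (hx0 : x₀ ∈ posOrth V) :
    ∃ xeq ∈ posOrth V, (∃ w, xeq - x₀ = S *ᵥ w) ∧
      Sᵀ *ᵥ (grad Φ xeq - grad Φ xtil) = 0 := by
  obtain ⟨hconv, hdiff, ⟨hmaps, hinj, hsurj⟩, hsteep⟩ := hΦ
  set b : Fin V → ℝ := grad Φ xtil with hb
  set G : (Fin V → ℝ) → ℝ := fun x => Φ x - x ⬝ᵥ b with hG
  set R : Submodule ℝ (Fin V → ℝ) := LinearMap.range S.mulVecLin with hR
  have hmemR : ∀ v : Fin V → ℝ, v ∈ R ↔ ∃ w, v = S *ᵥ w := by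
    intro v
    constructor
    · rintro ⟨w, rfl⟩; exact ⟨w, rfl⟩
    · rintro ⟨w, rfl⟩; exact ⟨w, rfl⟩
  set A : Set (Fin V → ℝ) := {x | x ∈ posOrth V ∧ x - x₀ ∈ R} with hA
  have hx0A : x₀ ∈ A := ⟨hx0, by simp⟩
  have gineq : ∀ {z v : Fin V → ℝ}, z ∈ posOrth V → v ∈ posOrth V →
      Φ z + (v - z) ⬝ᵥ grad Φ z ≤ Φ v := by
    intro z v hz hv
    have := grad_ineq hconv.convexOn hdiff hz hv
    rw [dot_grad]
    exact this
  have hGlb : ∀ x ∈ posOrth V, G xtil ≤ G x := by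
    intro x hx
    have h1 := gineq hxtil hx
    have hdot : (x - xtil) ⬝ᵥ b = x ⬝ᵥ b - xtil ⬝ᵥ b := sub_dotProduct _ _ _
    rw [← hb] at h1
    simp only [hG]
    linarith
  have hAne : (G '' A).Nonempty := ⟨G x₀, x₀, hx0A, rfl⟩
  have hbdd : BddBelow (G '' A) := ⟨G xtil, by rintro y ⟨x, hxA, rfl⟩; exact hGlb x hxA.1⟩
  set m : ℝ := sInf (G '' A) with hm
  have hmle : ∀ x ∈ A, m ≤ G x := fun x hx => csInf_le hbdd ⟨x, hx, rfl⟩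
  have hcoord : ∀ i : Fin V, ∃ ci : ℝ, ∀ x ∈ posOrth V, x i ≤ G x - ci := by
    intro i
    obtain ⟨y, hy, hgy⟩ := hsurj (mem_univ (b + Pi.single i 1))
    refine ⟨Φ y - y ⬝ᵥ (b + Pi.single i 1), fun x hx => ?_⟩
    have h1 := gineq hy hx
    rw [hgy] at h1
    have e1 : (x - y) ⬝ᵥ (b + Pi.single i 1)
        = (x ⬝ᵥ b + x i) - y ⬝ᵥ (b + Pi.single i 1) := by
      rw [sub_dotProduct, dotProduct_add, dotProduct_single, mul_one]
    rw [e1] at h1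
    simp only [hG]
    linarith
  choose ci hci using hcoord
  have hseq : ∀ k : ℕ, ∃ x, x ∈ A ∧ G x < m + 1/((k:ℝ)+1) := by
    intro k
    have hlt : m < m + 1/((k:ℝ)+1) := lt_add_of_pos_right _ (by positivity)
    obtain ⟨y, ⟨x, hxA, rfl⟩, hxy⟩ := exists_lt_of_csInf_lt hAne hlt
    exact ⟨x, hxA, hxy⟩
  choose u hu using hseq
  have huA : ∀ k, u k ∈ A := fun k => (hu k).1
  have huG : Tendsto (fun k => G (u k)) atTop (𝓝 m) := by
    have hup : Tendsto (fun k : ℕ => m + 1/((k:ℝ)+1)) atTop (𝓝 m) := by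
      have h0 : Tendsto (fun k : ℕ => 1/((k:ℝ)+1)) atTop (𝓝 0) :=
        tendsto_one_div_add_atTop_nhds_zero_nat
      simpa using tendsto_const_nhds.add h0
    exact tendsto_of_tendsto_of_tendsto_of_le_of_le tendsto_const_nhds hup
      (fun k => hmle _ (huA k)) (fun k => (hu k).2.le)
  set c : Fin V → ℝ := fun i => m + 1 - ci i with hc
  have hubox : ∀ k, u k ∈ Icc (0 : Fin V → ℝ) c := by
    intro k
    constructor
    · rw [Pi.le_def]
      intro i
      exact ((huA k).1 i).le
    · rw [Pi.le_def]
      intro i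
      have h1 := hci i (u k) (huA k).1
      have h2 := (hu k).2
      have h3 : 1/((k:ℝ)+1) ≤ 1 := by
        rw [div_le_one (by positivity)]
        have : (0:ℝ) ≤ (k:ℝ) := Nat.cast_nonneg k
        linarith
      have h4 : G (u k) < m + 1 := by
        have hle : m + 1/((k:ℝ)+1) ≤ m + 1 := by linarith only [h3]
        exact lt_of_lt_of_le h2 hle
      have h5 : u k i ≤ m + 1 - ci i := by linarith
      simpa [hc] using h5
  obtain ⟨xs, hxsIcc, ψ, hψmono, hψtend⟩ := (isCompact_Icc (a := (0 : Fin V → ℝ))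
    (b := c)).tendsto_subseq hubox
  have hxsG : Tendsto (fun k => G (u (ψ k))) atTop (𝓝 m) := huG.comp hψmono.tendsto_atTop
  have hxsR : xs - x₀ ∈ R := by
    have hclosed : IsClosed (R : Set (Fin V → ℝ)) := Submodule.closed_of_finiteDimensional R
    have ht : Tendsto (fun k => u (ψ k) - x₀) atTop (𝓝 (xs - x₀)) := hψtend.sub_const x₀
    exact hclosed.mem_of_tendsto ht (Eventually.of_forall fun k => (huA (ψ k)).2)
  have hxsnn : ∀ i, 0 ≤ xs i := fun i => hxsIcc.1 i
  have hGcont : ∀ x ∈ posOrth V, ContinuousAt G x := by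
    intro x hx
    exact (hdiff x hx).continuousAt.sub (continuous_dot b).continuousAt
  have hGconv : ∀ p ∈ posOrth V, ∀ q ∈ posOrth V, ∀ a a' : ℝ, 0 ≤ a → 0 ≤ a' → a + a' = 1 →
      G (a • p + a' • q) ≤ a * G p + a' * G q := by
    intro p hp q hq a a' ha ha' haa
    have h1 := hconv.convexOn.2 hp hq ha ha' haa
    have h2 : (a • p + a' • q) ⬝ᵥ b = a * (p ⬝ᵥ b) + a' * (q ⬝ᵥ b) := by
      rw [add_dotProduct, smul_dotProduct, smul_dotProduct, smul_eq_mul, smul_eq_mul]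
    simp only [smul_eq_mul] at h1
    simp only [hG]
    linarith
  by_cases hxsin : xs ∈ posOrth V
  · -- interior case: xs is the minimizer
    have hxsA : xs ∈ A := ⟨hxsin, hxsR⟩
    have hGxs : G xs = m := by
      have h1 : Tendsto (fun k => G (u (ψ k))) atTop (𝓝 (G xs)) :=
        (hGcont xs hxsin).tendsto.comp hψtend
      exact tendsto_nhds_unique h1 hxsG
    refine ⟨xs, hxsin, (hmemR _).1 hxsR, ?_⟩
    funext e
    rw [transpose_mulVec_apply]
    set d : Fin V → ℝ := S *ᵥ Pi.single e 1 with hd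
    have hdR : d ∈ R := ⟨Pi.single e 1, rfl⟩
    have hΦline : HasDerivAt (fun t : ℝ => Φ (xs + t • d)) (fderiv ℝ Φ xs d) 0 := by
      have := hasDerivAt_comp_line (F := Φ) (p := xs) (d := d) (l := 0)
        (by simpa using hdiff xs hxsin)
      simpa using this
    have hdot : HasDerivAt (fun t : ℝ => (xs + t • d) ⬝ᵥ b) (d ⬝ᵥ b) 0 := by
      have h1 : HasDerivAt (fun t : ℝ => xs ⬝ᵥ b + t * (d ⬝ᵥ b)) (d ⬝ᵥ b) 0 := by
        simpa using ((hasDerivAt_id (0:ℝ)).mul_const (d ⬝ᵥ b)).const_add (xs ⬝ᵥ b)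
      refine h1.congr_of_eventuallyEq (Eventually.of_forall fun t => ?_)
      simp [add_dotProduct, smul_dotProduct]
    have h2d : HasDerivAt (fun t : ℝ => G (xs + t • d)) (fderiv ℝ Φ xs d - d ⬝ᵥ b) 0 :=
      hΦline.sub hdot
    have hmin : IsLocalMin (fun t : ℝ => G (xs + t • d)) 0 := by
      have hcont : Continuous fun t : ℝ => xs + t • d := by
        exact continuous_const.add (continuous_id.smul continuous_const)
      have hmem : ∀ᶠ t : ℝ in 𝓝 0, xs + t • d ∈ posOrth V :=
        hcont.continuousAt.eventually_mem (by simpa using (isOpen_posOrth V).mem_nhds hxsin)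
      filter_upwards [hmem] with t ht
      have htA : xs + t • d ∈ A := by
        refine ⟨ht, ?_⟩
        have : xs + t • d - x₀ = (xs - x₀) + t • d := by abel
        rw [this]
        exact R.add_mem hxsR (R.smul_mem t hdR)
      have : m ≤ G (xs + t • d) := hmle _ htA
      simpa [hGxs] using this
    have hzero : fderiv ℝ Φ xs d - d ⬝ᵥ b = 0 := hmin.hasDerivAt_eq_zero h2d
    rw [dotProduct_sub, dot_grad]
    simpa using hzero
  · -- boundary case: contradiction
    exfalso
    have hxsfr : xs ∈ frontier {x : Fin V → ℝ | ∀ i, 0 ≤ x i} :=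
      mem_frontier_nonnegOrth hxsnn hxsin
    have hst := hsteep x₀ hx0 xs hxsfr
    set D : ℝ → ℝ := fun lam => deriv (fun l : ℝ => Φ (l • x₀ + (1 - l) • xs)) lam with hD
    set y : ℝ → (Fin V → ℝ) := fun t => xs + t • (x₀ - xs) with hy
    have hyeq : ∀ l : ℝ, l • x₀ + (1 - l) • xs = y l := by
      intro l
      simp only [hy]
      module
    set K : ℝ := G x₀ - m with hK
    have hK0 : 0 ≤ K := by
      have := hmle x₀ hx0A
      simp only [hK]
      linarith
    set C0 : ℝ := (x₀ - xs) ⬝ᵥ b with hC0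
    have hypos : ∀ t : ℝ, t ∈ Ioc (0:ℝ) 1 → y t ∈ posOrth V := by
      intro t ht i
      have h1 : y t i = (1 - t) * xs i + t * x₀ i := by
        simp only [hy, Pi.add_apply, Pi.smul_apply, Pi.sub_apply, smul_eq_mul]
        ring
      rw [h1]
      have := hxsnn i
      have := hx0 i
      nlinarith [ht.1, ht.2]
    have hyA : ∀ t : ℝ, t ∈ Ioc (0:ℝ) 1 → y t ∈ A := by
      intro t ht
      refine ⟨hypos t ht, ?_⟩
      have he : y t - x₀ = (1 - t) • (xs - x₀) := by
        simp only [hy]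
        module
      rw [he]
      exact R.smul_mem _ hxsR
    have hyub : ∀ t : ℝ, t ∈ Ioc (0:ℝ) 1 → G (y t) ≤ m + t * K := by
      intro t ht
      have hq : ∀ k, G (t • x₀ + (1 - t) • u (ψ k)) ≤ t * G x₀ + (1 - t) * G (u (ψ k)) :=
        fun k => hGconv x₀ hx0 (u (ψ k)) (huA (ψ k)).1 t (1 - t) ht.1.le (by linarith [ht.2])
          (by ring)
      have htend1 : Tendsto (fun k => G (t • x₀ + (1 - t) • u (ψ k))) atTop (𝓝 (G (y t))) := by
        have hmap : Tendsto (fun k => t • x₀ + (1 - t) • u (ψ k)) atTop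
            (𝓝 (t • x₀ + (1 - t) • xs)) := by
          exact tendsto_const_nhds.add (hψtend.const_smul (1 - t))
        rw [hyeq t] at hmap
        exact ((hGcont _ (hypos t ht)).tendsto).comp hmap
      have htend2 : Tendsto (fun k => t * G x₀ + (1 - t) * G (u (ψ k))) atTop
          (𝓝 (t * G x₀ + (1 - t) * m)) :=
        tendsto_const_nhds.add (hxsG.const_mul (1 - t))
      have := le_of_tendsto_of_tendsto' htend1 htend2 hq
      simp only [hK]
      linarith
    have htan : ∀ t t' : ℝ, t ∈ Ioc (0:ℝ) 1 → t' ∈ Ioc (0:ℝ) 1 →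
        G (y t') + (t - t') * (D t' - C0) ≤ G (y t) := by
      intro t t' ht ht'
      have hdiffyt' : DifferentiableAt ℝ Φ (y t') := hdiff _ (hypos t' ht')
      have hDeq : D t' = fderiv ℝ Φ (y t') (x₀ - xs) := by
        have hda : HasDerivAt (fun l : ℝ => Φ (xs + l • (x₀ - xs)))
            (fderiv ℝ Φ (xs + t' • (x₀ - xs)) (x₀ - xs)) t' := hasDerivAt_comp_line hdiffyt'
        have hfun : (fun l : ℝ => Φ (l • x₀ + (1 - l) • xs))
            = fun l : ℝ => Φ (xs + l • (x₀ - xs)) := by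
          funext l
          rw [hyeq l]
        simp only [hD, hfun]
        exact hda.deriv
      have h1 := gineq (hypos t' ht') (hypos t ht)
      have he : y t - y t' = (t - t') • (x₀ - xs) := by
        simp only [hy]
        module
      have hdot1 : (y t - y t') ⬝ᵥ grad Φ (y t') = (t - t') * fderiv ℝ Φ (y t') (x₀ - xs) := by
        rw [he, smul_dotProduct, smul_eq_mul, dot_grad]
      have hdot2 : (y t) ⬝ᵥ b - (y t') ⬝ᵥ b = (t - t') * C0 := by
        rw [← sub_dotProduct, he, smul_dotProduct, smul_eq_mul]
      rw [hdot1] at h1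
      simp only [hG]
      rw [hDeq]
      linarith
    -- choose t' small with D t' very negative
    have hev1 : ∀ᶠ t' in nhdsWithin 0 (Set.Ioi 0), D t' ≤ C0 - (K + 1) :=
      hst.eventually (eventually_le_atBot (C0 - (K + 1)))
    have hev2 : ∀ᶠ t' in nhdsWithin 0 (Set.Ioi 0), t' ∈ Ioc (0:ℝ) 1 :=
      Ioc_mem_nhdsGT_of_mem (by simp : (0:ℝ) ∈ Ico (0:ℝ) 1)
    obtain ⟨t', hDt', ht'⟩ := (hev1.and hev2).exists
    set t : ℝ := t' / (2 * (K + 1)) with htdef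
    have ht'pos : 0 < t' := ht'.1
    have htpos : 0 < t := by positivity
    have htlt : t < t' := by
      rw [htdef, div_lt_iff₀ (by positivity)]
      nlinarith
    have htI : t ∈ Ioc (0:ℝ) 1 := ⟨htpos, by
      have := ht'.2
      nlinarith⟩
    have h1 := hyub t htI
    have h2 := htan t t' htI ht'
    have h3 := hmle _ (hyA t' ht')
    -- G (y t) ≥ G (y t') + (t' - t) * (C0 - D t') ≥ m + (t' - t) * (K + 1)
    have h4 : m + (t' - t) * (K + 1) ≤ G (y t) := by
      have hfac : (t - t') * (D t' - C0) = (t' - t) * (C0 - D t') := by ring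
      have h5 : (t' - t) * (K + 1) ≤ (t' - t) * (C0 - D t') := by
        apply mul_le_mul_of_nonneg_left _ (by linarith)
        linarith
      nlinarith [h2, h3]
    -- contradiction: m + t*K ≥ G(y t) ≥ m + (t' - t)*(K+1), t = t'/(2(K+1))
    have hcontr : t * K < (t' - t) * (K + 1) := by
      have he : t' = t * (2 * (K + 1)) := by
        rw [htdef]
        field_simp
      rw [he]
      nlinarith [mul_nonneg htpos.le hK0, mul_nonneg (mul_nonneg htpos.le hK0) hK0]
    linarith

/-- Steady states of the equilibrium flow: (i) x is steady iff x ∈ M^eq(x̃);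
(ii) in each stoichiometric class there is exactly one steady state, the unique point of
P^sc(x₀) ∩ M^eq(x̃), which is the unique minimizer of D[·‖x̃] over P^sc(x₀) and of D[x₀‖·]
over M^eq(x̃). -/
theorem equilibrium_flow_steady_state_characterization {V E : ℕ}
    (S : Matrix (Fin V) (Fin E) ℝ)
    (Φ : (Fin V → ℝ) → ℝ) (hΦ : IsThermo Φ)
    (Ψstar : (Fin V → ℝ) → (Fin E → ℝ) → ℝ)
    (hdiss : ∀ x ∈ posOrth V, IsDissipation (Ψstar x))
    (xtil : Fin V → ℝ) (hxtil : xtil ∈ posOrth V) :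
    (∀ x ∈ posOrth V,
      (S *ᵥ grad (Ψstar x) (Sᵀ *ᵥ (grad Φ x - grad Φ xtil)) = 0 ↔
        Sᵀ *ᵥ (grad Φ x - grad Φ xtil) = 0)) ∧
    (∀ x₀ ∈ posOrth V, ∃ xeq : Fin V → ℝ,
      (xeq ∈ posOrth V ∧ (∃ w, xeq - x₀ = S *ᵥ w) ∧
        Sᵀ *ᵥ (grad Φ xeq - grad Φ xtil) = 0) ∧
      (∀ x : Fin V → ℝ,
        (x ∈ posOrth V ∧ (∃ w, x - x₀ = S *ᵥ w) ∧
          Sᵀ *ᵥ (grad Φ x - grad Φ xtil) = 0) → x = xeq) ∧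
      (∀ x ∈ posOrth V, (∃ w, x - x₀ = S *ᵥ w) → x ≠ xeq →
        breg Φ xeq xtil < breg Φ x xtil) ∧
      (∀ xq ∈ posOrth V, Sᵀ *ᵥ (grad Φ xq - grad Φ xtil) = 0 → xq ≠ xeq →
        breg Φ x₀ xeq < breg Φ x₀ xq)) := by
  constructor
  · intro x hx
    constructor
    · intro h0
      by_contra hf
      have hdot : (Sᵀ *ᵥ (grad Φ x - grad Φ xtil)) ⬝ᵥ
          grad (Ψstar x) (Sᵀ *ᵥ (grad Φ x - grad Φ xtil)) = 0 := by
        rw [mulVec_transpose] at h0 ⊢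
        rw [← dotProduct_mulVec, h0, dotProduct_zero]
      exact absurd hdot (ne_of_gt (diss_dot_pos (hdiss x hx) hf))
    · intro h
      rw [h]
      have hg0 : grad (Ψstar x) 0 = 0 := by
        funext i
        simp [grad, diss_fderiv_zero (hdiss x hx)]
      rw [hg0, mulVec_zero]
  · intro x₀ hx0
    obtain ⟨xeq, hxeqp, hxeqr, hxeqq⟩ := exists_eq_point S hΦ hxtil hx0
    have hdiffrange : ∀ {x : Fin V → ℝ}, (∃ w, x - x₀ = S *ᵥ w) → ∃ w, x - xeq = S *ᵥ w := by
      rintro x ⟨w1, hw1⟩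
      obtain ⟨w2, hw2⟩ := hxeqr
      refine ⟨w1 - w2, ?_⟩
      rw [Matrix.mulVec_sub, ← hw1, ← hw2]
      abel
    refine ⟨xeq, ⟨hxeqp, hxeqr, hxeqq⟩, ?_, ?_, ?_⟩
    · rintro x ⟨hxp, hxr, hxq⟩
      by_contra hne
      have hd1 : ∃ w, x - xeq = S *ᵥ w := hdiffrange hxr
      have hd2 : ∃ w, xeq - x = S *ᵥ w := by
        obtain ⟨w, hw⟩ := hd1
        refine ⟨-w, ?_⟩
        rw [Matrix.mulVec_neg, ← hw]
        abel
      have l1 := breg_lt_left S hΦ xtil hxp hxeqp hd1 hxeqq hne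
      have l2 := breg_lt_left S hΦ xtil hxeqp hxp hd2 hxq (Ne.symm hne)
      linarith
    · intro x hxp hxr hne
      exact breg_lt_left S hΦ xtil hxp hxeqp (hdiffrange hxr) hxeqq hne
    · intro xq hxqp hxqe hne
      exact breg_lt_right S hΦ xtil hxeqp hxqp hxeqr hxeqq hxqe hne
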